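/- In the graph Z_{α,β} augmented by adding at most α new vertices and at most β new edges, fully occupied by n = 1 + (2β+1)(α+1) robots, consider an arm P (path of α+1 vertices) that is not incident to any added edge. If a robot initially located at the leaf end of P ever reaches the center vertex, then at that moment all α+1 vertices of P are unoccupied, which is impossible since the augmented graph has at most n + α vertices and n robots, so at most α vertices are ever vacant. Hence the robot at the leaf of such an arm can never reach the center. -/

import Mathlib

/-- The vertex set of the graph `Z_{α,β}`: a center vertex together with `2β+1`
disjoint arms (paths), each with `α+1` vertices. -/
abbrev ZVert (α β : ℕ) : Type := Unit ⊕ (Fin (2 * β + 1) × Fin (α + 1))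

/-- The graph `Z_{α,β}`: the center is joined to the first vertex of each arm, and
consecutive vertices along each arm are adjacent. -/
def ZGraph (α β : ℕ) : SimpleGraph (ZVert α β) :=
  SimpleGraph.fromRel (fun u v =>
    (∃ j : Fin (2 * β + 1), u = Sum.inl () ∧ v = Sum.inr (j, ⟨0, Nat.succ_pos α⟩)) ∨
    (∃ (j : Fin (2 * β + 1)) (i : ℕ) (h : i + 1 < α + 1),
      u = Sum.inr (j, ⟨i, Nat.lt_of_succ_lt h⟩) ∧ v = Sum.inr (j, ⟨i + 1, h⟩)))

/-- A simple path move: robots slide synchronously one step along a simple path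
whose last vertex is unoccupied; all other robots stay put. -/
def IsPathMove {V ι : Type*} (G : SimpleGraph V) (S S' : ι → V) : Prop :=
  ∃ l : List V, 2 ≤ l.length ∧ l.Nodup ∧ l.Chain' G.Adj ∧
    (∀ (hne : l ≠ []) (i : ι), S i ≠ l.getLast hne) ∧
    (∀ i, S i ∉ l → S' i = S i) ∧
    (∀ (i : ι) (k : ℕ) (hk : k + 1 < l.length),
      S i = l.get ⟨k, by omega⟩ → S' i = l.get ⟨k + 1, hk⟩)

/-- A simple rotation move: robots on a fully occupied simple cycle advance
synchronously one step along the cycle; all other robots stay put. -/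
def IsRotation {V ι : Type*} (G : SimpleGraph V) (S S' : ι → V) : Prop :=
  ∃ l : List V, 3 ≤ l.length ∧ l.Nodup ∧ l.Chain' G.Adj ∧
    (∀ hne : l ≠ [], G.Adj (l.getLast hne) (l.head hne)) ∧
    (∀ v ∈ l, ∃ i, S i = v) ∧
    (∀ i, S i ∉ l → S' i = S i) ∧
    (∀ (i : ι) (k : ℕ) (hk : k < l.length), S i = l.get ⟨k, hk⟩ →
      S' i = l.get ⟨(k + 1) % l.length, Nat.mod_lt _ (by omega)⟩)

/-! ### Auxiliary material -/

/-- The `i`-th vertex of arm `j`, viewed in the augmented vertex type. -/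
abbrev armV (α β a : ℕ) (j : Fin (2 * β + 1)) (i : Fin (α + 1)) :
    ZVert α β ⊕ Fin a := Sum.inl (Sum.inr (j, i))

lemma armV_injective (α β a : ℕ) (j : Fin (2 * β + 1)) {i i' : Fin (α + 1)}
    (h : armV α β a j i = armV α β a j i') : i = i' := by
  simpa [armV] using h

lemma armV_ne_center (α β a : ℕ) (j : Fin (2 * β + 1)) (i : Fin (α + 1)) :
    armV α β a j i ≠ Sum.inl (Sum.inl ()) := by
  simp [armV]

lemma zgraph_adj_arm {α β : ℕ} (j : Fin (2*β+1)) (i : Fin (α+1)) (u : ZVert α β)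
    (h : (ZGraph α β).Adj (Sum.inr (j, i)) u) :
    (u = Sum.inl () ∧ (i:ℕ) = 0) ∨
    ∃ i' : Fin (α+1), u = Sum.inr (j, i') ∧ ((i':ℕ) = (i:ℕ)+1 ∨ (i:ℕ) = (i':ℕ)+1) := by
  rw [ZGraph, SimpleGraph.fromRel_adj] at h
  obtain ⟨hne, h | h⟩ := h
  · rcases h with ⟨j', h1, h2⟩ | ⟨j', i0, hlt, h1, h2⟩
    · exact absurd h1 (by simp)
    · rw [Sum.inr.injEq, Prod.mk.injEq] at h1
      obtain ⟨hj, hi⟩ := h1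
      subst hj
      refine Or.inr ⟨⟨i0+1, hlt⟩, by rw [h2], Or.inl ?_⟩
      rw [hi]
  · rcases h with ⟨j', h1, h2⟩ | ⟨j', i0, hlt, h1, h2⟩
    · rw [Sum.inr.injEq, Prod.mk.injEq] at h2
      obtain ⟨hj, hi⟩ := h2
      exact Or.inl ⟨h1, by simp [hi]⟩
    · rw [Sum.inr.injEq, Prod.mk.injEq] at h2
      obtain ⟨hj, hi⟩ := h2
      subst hj
      refine Or.inr ⟨⟨i0, Nat.lt_of_succ_lt hlt⟩, by rw [h1], Or.inr ?_⟩
      rw [hi]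

lemma pathMove_cases {V ι : Type*} {G : SimpleGraph V} {S S' : ι → V}
    (h : IsPathMove G S S') :
    ∃ l : List V, 2 ≤ l.length ∧ l.Nodup ∧ l.Chain' G.Adj ∧
      ∀ p, (S p ∉ l ∧ S' p ∉ l ∧ S' p = S p) ∨
        ∃ k, ∃ hk : k + 1 < l.length,
          S p = l.get ⟨k, by omega⟩ ∧ S' p = l.get ⟨k + 1, hk⟩ := by
  obtain ⟨l, hlen, hnd, hch, hlast, hstay, hmove⟩ := h
  refine ⟨l, hlen, hnd, hch, fun p => ?_⟩
  by_cases hm : S p ∈ l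
  · obtain ⟨⟨k, hk⟩, hget⟩ := List.mem_iff_get.mp hm
    have hk1 : k + 1 < l.length := by
      rcases Nat.lt_or_ge (k+1) l.length with h' | h'
      · exact h'
      · exfalso
        have hkl : k = l.length - 1 := by omega
        have hne : l ≠ [] := by rintro rfl; simp at hk
        have hg : l.getLast hne = l.get ⟨k, hk⟩ := by
          rw [List.getLast_eq_getElem]; show l.get ⟨l.length - 1, _⟩ = _
          congr 1
          exact Fin.ext hkl.symm
        exact hlast hne p (by rw [hg, hget])
    exact Or.inr ⟨k, hk1, hget.symm, hmove p k hk1 hget.symm⟩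
  · refine Or.inl ⟨hm, ?_, hstay p hm⟩
    rw [hstay p hm]; exact hm

lemma pathMove_inj {V ι : Type*} {G : SimpleGraph V} {S S' : ι → V}
    (hnd : (∃ l : List V, 2 ≤ l.length ∧ l.Nodup ∧ l.Chain' G.Adj ∧
      ∀ p, (S p ∉ l ∧ S' p ∉ l ∧ S' p = S p) ∨
        ∃ k, ∃ hk : k + 1 < l.length,
          S p = l.get ⟨k, by omega⟩ ∧ S' p = l.get ⟨k + 1, hk⟩))
    (hS : Function.Injective S) : Function.Injective S' := by
  obtain ⟨l, hlen, hnd, hch, hc⟩ := hnd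
  intro p q hpq
  rcases hc p with ⟨hp1, hp2, hp3⟩ | ⟨k, hk, hp3, hp4⟩ <;>
    rcases hc q with ⟨hq1, hq2, hq3⟩ | ⟨k', hk', hq3, hq4⟩
  · exact hS (hp3 ▸ hq3 ▸ hpq)
  · exact absurd (hpq ▸ hq4 ▸ List.get_mem l _) hp2
  · exact absurd (hpq ▸ hp4 ▸ List.get_mem l _) hq2
  · apply hS
    rw [hp3, hq3]
    have heq : l.get ⟨k+1,hk⟩ = l.get ⟨k'+1,hk'⟩ := by rw [← hp4, ← hq4]; exact hpq
    have : k = k' := by simpa [Fin.ext_iff] using hnd.get_inj_iff.mp heq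
    simp [this]

lemma succ_mod_inj {n x y : ℕ} (hx : x < n) (hy : y < n)
    (h : (x + 1) % n = (y + 1) % n) : x = y := by
  rcases Nat.lt_or_ge (x+1) n with h1 | h1 <;> rcases Nat.lt_or_ge (y+1) n with h2 | h2
  · rw [Nat.mod_eq_of_lt h1, Nat.mod_eq_of_lt h2] at h; omega
  · have hy1 : y + 1 = n := by omega
    rw [Nat.mod_eq_of_lt h1, hy1, Nat.mod_self] at h; omega
  · have hx1 : x + 1 = n := by omega
    rw [Nat.mod_eq_of_lt h2, hx1, Nat.mod_self] at h; omega
  · omega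

lemma rotation_cases {V ι : Type*} {G : SimpleGraph V} {S S' : ι → V}
    (h : IsRotation G S S') :
    ∃ l : List V, 3 ≤ l.length ∧ l.Nodup ∧ l.Chain' G.Adj ∧
      (∀ hne : l ≠ [], G.Adj (l.getLast hne) (l.head hne)) ∧
      (∀ v ∈ l, ∃ i, S i = v) ∧
      ∀ p, (S p ∉ l ∧ S' p ∉ l ∧ S' p = S p) ∨
        ∃ k, ∃ hk : k < l.length,
          S p = l.get ⟨k, hk⟩ ∧
          S' p = l.get ⟨(k + 1) % l.length, Nat.mod_lt _ (by omega)⟩ := by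
  obtain ⟨l, hlen, hnd, hch, hcyc, hfull, hstay, hmove⟩ := h
  refine ⟨l, hlen, hnd, hch, hcyc, hfull, fun p => ?_⟩
  by_cases hm : S p ∈ l
  · obtain ⟨⟨k, hk⟩, hget⟩ := List.mem_iff_get.mp hm
    exact Or.inr ⟨k, hk, hget.symm, hmove p k hk hget.symm⟩
  · refine Or.inl ⟨hm, ?_, hstay p hm⟩
    rw [hstay p hm]; exact hm

lemma rotation_inj {V ι : Type*} {l : List V} {S S' : ι → V}
    (hlen : 3 ≤ l.length) (hnd : l.Nodup)
    (hc : ∀ p, (S p ∉ l ∧ S' p ∉ l ∧ S' p = S p) ∨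
        ∃ k, ∃ hk : k < l.length,
          S p = l.get ⟨k, hk⟩ ∧
          S' p = l.get ⟨(k + 1) % l.length, Nat.mod_lt _ (by omega)⟩)
    (hS : Function.Injective S) : Function.Injective S' := by
  intro p q hpq
  rcases hc p with ⟨hp1, hp2, hp3⟩ | ⟨k, hk, hp3, hp4⟩ <;>
    rcases hc q with ⟨hq1, hq2, hq3⟩ | ⟨k', hk', hq3, hq4⟩
  · exact hS (hp3 ▸ hq3 ▸ hpq)
  · exact absurd (hpq ▸ hq4 ▸ List.get_mem l _) hp2
  · exact absurd (hpq ▸ hp4 ▸ List.get_mem l _) hq2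
  · apply hS
    rw [hp3, hq3]
    have heq : l.get ⟨(k+1) % l.length, Nat.mod_lt _ (by omega)⟩ =
        l.get ⟨(k'+1) % l.length, Nat.mod_lt _ (by omega)⟩ := by
      rw [← hp4, ← hq4]; exact hpq
    have h2 := hnd.get_inj_iff.mp heq
    have : k = k' := succ_mod_inj hk hk' (by simpa [Fin.ext_iff] using h2)
    simp [this]

/-- The invariant: the configuration is injective, the leaf robot sits on some
vertex of arm `j`, and every arm vertex strictly beyond it is vacant. -/
def RobotInv (α β a : ℕ) (j : Fin (2 * β + 1)) (r0 : Fin (1 + (2 * β + 1) * (α + 1)))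
    (A : Fin (1 + (2 * β + 1) * (α + 1)) → ZVert α β ⊕ Fin a) : Prop :=
  Function.Injective A ∧ ∃ i : Fin (α + 1), A r0 = armV α β a j i ∧
    ∀ (k : Fin (α + 1)), (i:ℕ) < (k:ℕ) → ∀ r, A r ≠ armV α β a j k

lemma count_contra {α β a : ℕ} (ha : a ≤ α) (j : Fin (2 * β + 1))
    (B : Fin (1 + (2 * β + 1) * (α + 1)) → ZVert α β ⊕ Fin a)
    (hB : Function.Injective B)
    (hnone : ∀ (k : Fin (α + 1)) (r), B r ≠ armV α β a j k) : False := by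
  have hinj : Function.Injective
      (Sum.elim B (armV α β a j) :
        Fin (1 + (2 * β + 1) * (α + 1)) ⊕ Fin (α + 1) → ZVert α β ⊕ Fin a) := by
    intro x y hxy
    cases x with
    | inl p =>
      cases y with
      | inl q => exact congrArg Sum.inl (hB hxy)
      | inr q => exact absurd hxy (hnone q p)
    | inr p =>
      cases y with
      | inl q => exact absurd hxy.symm (hnone p q)
      | inr q => exact congrArg Sum.inr (armV_injective α β a j hxy)
  have hcard := Fintype.card_le_of_injective _ hinj
  simp [Fintype.card_sum] at hcard
  nlinarith [hcard, ha]
lemma step_path {α β a : ℕ} (ha : a ≤ α) {j : Fin (2 * β + 1)}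
    {r0 : Fin (1 + (2 * β + 1) * (α + 1))}
    {H : SimpleGraph (ZVert α β ⊕ Fin a)}
    (hnb : ∀ (i : Fin (α+1)) (w : ZVert α β ⊕ Fin a), H.Adj (armV α β a j i) w →
      (w = Sum.inl (Sum.inl ()) ∧ (i:ℕ) = 0) ∨
      ∃ i' : Fin (α+1), w = armV α β a j i' ∧ ((i':ℕ) = (i:ℕ)+1 ∨ (i:ℕ) = (i':ℕ)+1))
    {A B : Fin (1 + (2 * β + 1) * (α + 1)) → ZVert α β ⊕ Fin a}
    (hInv : RobotInv α β a j r0 A) (hmv : IsPathMove H A B) :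
    RobotInv α β a j r0 B := by
  obtain ⟨hAinj, i, hAr0, hvac⟩ := hInv
  obtain ⟨l, hlen, hnd, hch, hc⟩ := pathMove_cases hmv
  have hBinj : Function.Injective B := pathMove_inj ⟨l, hlen, hnd, hch, hc⟩ hAinj
  have hgi : ∀ x y (hx : x < l.length) (hy : y < l.length),
      l.get ⟨x,hx⟩ = l.get ⟨y,hy⟩ → x = y := by
    intro x y hx hy h
    simpa [Fin.ext_iff] using hnd.get_inj_iff.mp h
  have hadjl : ∀ m (hm' : m + 1 < l.length),
      H.Adj (l.get ⟨m, by omega⟩) (l.get ⟨m+1, hm'⟩) :=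
    fun m hm' => List.isChain_iff_getElem.mp hch m (by omega)
  have hocc : ∀ r (k : Fin (α+1)), A r = armV α β a j k → (k:ℕ) ≤ (i:ℕ) := by
    intro r k h
    by_contra h'
    exact hvac k (by omega) r h
  have huniq : ∀ r, A r = armV α β a j i → r = r0 := fun r h =>
    hAinj (h.trans hAr0.symm)
  have hentry : ∀ r (k : Fin (α+1)), B r = armV α β a j k →
      (A r ∉ l ∧ A r = armV α β a j k) ∨
      ∃ m, ∃ hm' : m + 1 < l.length, A r = l.get ⟨m, by omega⟩ ∧
        l.get ⟨m+1, hm'⟩ = armV α β a j k ∧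
        ((A r = Sum.inl (Sum.inl ()) ∧ (k:ℕ) = 0) ∨
          ∃ k' : Fin (α+1), A r = armV α β a j k' ∧
            ((k':ℕ) = (k:ℕ)+1 ∨ (k:ℕ) = (k':ℕ)+1)) := by
    intro r k h
    rcases hc r with ⟨h1, h2, h3⟩ | ⟨m, hm', h1, h2⟩
    · exact Or.inl ⟨h1, h3.symm.trans h⟩
    · have hga : l.get ⟨m+1, hm'⟩ = armV α β a j k := h2.symm.trans h
      have hadj0 := hadjl m hm'
      rw [hga, ← h1] at hadj0
      exact Or.inr ⟨m, hm', h1, hga, hnb k (A r) hadj0.symm⟩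
  rcases hc r0 with ⟨h1, h2, h3⟩ | ⟨k0, hk0, h1, h2⟩
  · -- the leaf robot stays put
    refine ⟨hBinj, i, h3.trans hAr0, ?_⟩
    intro k hk r h
    rcases hentry r k h with ⟨hs1, hs2⟩ | ⟨m, hm', e1, e2, ⟨f1, f2⟩ | ⟨k', f1, f2⟩⟩
    · exact absurd (hocc r k hs2) (by omega)
    · omega
    · have hk'le := hocc r k' f1
      rcases f2 with f2 | f2
      · omega
      · have hki : k' = i := Fin.ext (by omega)
        rw [hki] at f1
        have hrr := huniq r f1
        subst hrr
        exact h1 (by rw [e1]; exact List.get_mem l _)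
  · -- the leaf robot moves
    have hg0 : l.get ⟨k0, by omega⟩ = armV α β a j i := h1.symm.trans hAr0
    have hadj0 := hadjl k0 hk0
    rw [hg0] at hadj0
    rcases hnb i _ hadj0 with ⟨hcase, hi0⟩ | ⟨i', hb1, hb2⟩
    · -- the leaf robot moves to the center: impossible by counting
      exfalso
      refine count_contra ha j B hBinj ?_
      intro k r h
      rcases hentry r k h with ⟨hs1, hs2⟩ | ⟨m, hm', e1, e2, ⟨f1, f2⟩ | ⟨k', f1, f2⟩⟩
      · have := hocc r k hs2
        have hki : k = i := Fin.ext (by omega)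
        rw [hki] at hs2
        have hrr := huniq r hs2
        subst hrr
        exact hs1 (by rw [h1]; exact List.get_mem l _)
      · have hki : k = i := Fin.ext (by omega)
        rw [hki, ← hg0] at e2
        have hm1 : m + 1 = k0 := hgi _ _ _ _ e2
        have heq : l.get ⟨m, by omega⟩ = l.get ⟨k0+1, hk0⟩ := by
          rw [← e1, f1, ← hcase]
        have := hgi _ _ _ _ heq
        omega
      · have hk'le := hocc r k' f1
        have hki : k' = i := Fin.ext (by omega)
        rw [hki] at f1
        have hrr := huniq r f1
        subst hrr
        have hm0 : m = k0 := hgi _ _ _ _ (e1.symm.trans h1)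
        have heq : l.get ⟨m+1, hm'⟩ = l.get ⟨k0+1, hk0⟩ := by
          congr 1
          exact Fin.ext (by simp [hm0])
        rw [heq, hcase] at e2
        exact armV_ne_center α β a j k e2.symm
    · -- the leaf robot moves to a neighbouring arm vertex
      rcases hb2 with hb2 | hb2
      · -- it moves away from the center
        refine ⟨hBinj, i', h2.trans hb1, ?_⟩
        intro k hk r h
        rcases hentry r k h with ⟨hs1, hs2⟩ | ⟨m, hm', e1, e2, ⟨f1, f2⟩ | ⟨k', f1, f2⟩⟩
        · exact absurd (hocc r k hs2) (by omega)
        · omega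
        · have := hocc r k' f1
          omega
      · -- it moves toward the center
        refine ⟨hBinj, i', h2.trans hb1, ?_⟩
        intro k hk r h
        rcases hentry r k h with ⟨hs1, hs2⟩ | ⟨m, hm', e1, e2, ⟨f1, f2⟩ | ⟨k', f1, f2⟩⟩
        · have := hocc r k hs2
          have hki : k = i := Fin.ext (by omega)
          rw [hki] at hs2
          have hrr := huniq r hs2
          subst hrr
          exact hs1 (by rw [h1]; exact List.get_mem l _)
        · omega
        · have hk'le := hocc r k' f1
          rcases f2 with f2 | f2
          · omega
          · by_cases hc1 : (k':ℕ) = (i:ℕ)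
            · have hki : k' = i := Fin.ext hc1
              rw [hki] at f1
              have hrr := huniq r f1
              subst hrr
              have hm0 : m = k0 := hgi _ _ _ _ (e1.symm.trans h1)
              have heq : l.get ⟨m+1, hm'⟩ = l.get ⟨k0+1, hk0⟩ := by
                congr 1
                exact Fin.ext (by simp [hm0])
              rw [heq, hb1] at e2
              have := armV_injective α β a j e2
              have : (i':ℕ) = (k:ℕ) := by rw [this]
              omega
            · -- k' = i' and k = i
              have hki : k = i := Fin.ext (by omega)
              have hk'i : k' = i' := Fin.ext (by omega)
              rw [hki, ← hg0] at e2
              have hm1 : m + 1 = k0 := hgi _ _ _ _ e2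
              rw [hk'i] at f1
              have heq : l.get ⟨m, by omega⟩ = l.get ⟨k0+1, hk0⟩ := by
                rw [← e1, f1, ← hb1]
              have := hgi _ _ _ _ heq
              omega
lemma step_rot {α β a : ℕ} {j : Fin (2 * β + 1)}
    {r0 : Fin (1 + (2 * β + 1) * (α + 1))}
    {H : SimpleGraph (ZVert α β ⊕ Fin a)}
    (hnb : ∀ (i : Fin (α+1)) (w : ZVert α β ⊕ Fin a), H.Adj (armV α β a j i) w →
      (w = Sum.inl (Sum.inl ()) ∧ (i:ℕ) = 0) ∨
      ∃ i' : Fin (α+1), w = armV α β a j i' ∧ ((i':ℕ) = (i:ℕ)+1 ∨ (i:ℕ) = (i':ℕ)+1))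
    {A B : Fin (1 + (2 * β + 1) * (α + 1)) → ZVert α β ⊕ Fin a}
    (hInv : RobotInv α β a j r0 A) (hmv : IsRotation H A B) :
    RobotInv α β a j r0 B := by
  obtain ⟨hAinj, i, hAr0, hvac⟩ := hInv
  obtain ⟨l, hlen, hnd, hch, hcyc, hfull, hc⟩ := rotation_cases hmv
  have hBinj : Function.Injective B := rotation_inj hlen hnd hc hAinj
  have hgi : ∀ x y (hx : x < l.length) (hy : y < l.length),
      l.get ⟨x,hx⟩ = l.get ⟨y,hy⟩ → x = y := by
    intro x y hx hy h
    simpa [Fin.ext_iff] using hnd.get_inj_iff.mp h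
  have hocc : ∀ r (k : Fin (α+1)), A r = armV α β a j k → (k:ℕ) ≤ (i:ℕ) := by
    intro r k h
    by_contra h'
    exact hvac k (by omega) r h
  rcases hc r0 with ⟨h1, h2, h3⟩ | ⟨k0, hk0, h1, h2⟩
  · -- the leaf robot is not on the cycle
    refine ⟨hBinj, i, h3.trans hAr0, ?_⟩
    intro k hk r h
    rcases hc r with ⟨g1, g2, g3⟩ | ⟨m, hm', g1, g2⟩
    · exact hvac k hk r (g3.symm.trans h)
    · have hmem : armV α β a j k ∈ l := by
        rw [← h, g2]; exact List.get_mem l _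
      obtain ⟨p, hp⟩ := hfull _ hmem
      exact hvac k hk p hp
  · -- the leaf robot is on the cycle: impossible
    exfalso
    have hne : l ≠ [] := List.ne_nil_of_length_pos (by omega)
    have hg0 : l.get ⟨k0, hk0⟩ = armV α β a j i := h1.symm.trans hAr0
    have hadjl : ∀ m (hm' : m + 1 < l.length),
        H.Adj (l.get ⟨m, by omega⟩) (l.get ⟨m+1, hm'⟩) :=
      fun m hm' => List.isChain_iff_getElem.mp hch m (by omega)
    have hcyc' : H.Adj (l.get ⟨l.length - 1, by omega⟩) (l.get ⟨0, by omega⟩) := by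
      have h' := hcyc hne
      rw [List.getLast_eq_getElem] at h'
      have hh : l.head hne = l.get ⟨0, by omega⟩ := (List.get_mk_zero _).symm
      rwa [hh] at h'
    have hsucc : ∃ ms, ∃ hms : ms < l.length,
        H.Adj (armV α β a j i) (l.get ⟨ms, hms⟩) ∧
        ((k0 + 1 < l.length ∧ ms = k0 + 1) ∨ (k0 + 1 = l.length ∧ ms = 0)) := by
      by_cases hcs : k0 + 1 < l.length
      · refine ⟨k0+1, hcs, ?_, Or.inl ⟨hcs, rfl⟩⟩
        have h' := hadjl k0 hcs
        rwa [hg0] at h'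
      · have hk0e : k0 + 1 = l.length := by omega
        refine ⟨0, by omega, ?_, Or.inr ⟨hk0e, rfl⟩⟩
        have h' := hcyc'
        have hix : l.get ⟨l.length - 1, by omega⟩ = l.get ⟨k0, hk0⟩ := by
          congr 1
          exact Fin.ext (by simp; omega)
        rwa [hix, hg0] at h'
    have hpred : ∃ mp, ∃ hmp : mp < l.length,
        H.Adj (armV α β a j i) (l.get ⟨mp, hmp⟩) ∧
        ((1 ≤ k0 ∧ mp = k0 - 1) ∨ (k0 = 0 ∧ mp = l.length - 1)) := by
      by_cases hcp : 1 ≤ k0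
      · refine ⟨k0 - 1, by omega, ?_, Or.inl ⟨hcp, rfl⟩⟩
        have h' := hadjl (k0-1) (by omega)
        have hix : l.get ⟨k0-1+1, by omega⟩ = l.get ⟨k0, hk0⟩ := by
          congr 1
          exact Fin.ext (by simp; omega)
        rw [hix, hg0] at h'
        exact h'.symm
      · have hk00 : k0 = 0 := by omega
        refine ⟨l.length - 1, by omega, ?_, Or.inr ⟨hk00, rfl⟩⟩
        have h' := hcyc'
        have hix : l.get ⟨0, by omega⟩ = l.get ⟨k0, hk0⟩ := by
          congr 1
          exact Fin.ext (by simp; omega)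
        rw [hix, hg0] at h'
        exact h'.symm
    obtain ⟨ms, hms, hadjs, hcs⟩ := hsucc
    obtain ⟨mp, hmp, hadjp, hcp⟩ := hpred
    have hmsp : ms ≠ mp := by
      rcases hcs with ⟨u1, u2⟩ | ⟨u1, u2⟩ <;> rcases hcp with ⟨w1, w2⟩ | ⟨w1, w2⟩ <;> omega
    have hvne : l.get ⟨ms, hms⟩ ≠ l.get ⟨mp, hmp⟩ := fun h => hmsp (hgi _ _ _ _ h)
    have hclass : ∀ m (hm' : m < l.length), H.Adj (armV α β a j i) (l.get ⟨m, hm'⟩) →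
        (l.get ⟨m, hm'⟩ = Sum.inl (Sum.inl ()) ∧ (i:ℕ) = 0) ∨
        (l.get ⟨m, hm'⟩ =
          armV α β a j ⟨(i:ℕ)-1, Nat.lt_of_le_of_lt (Nat.sub_le _ _) i.isLt⟩ ∧
          1 ≤ (i:ℕ)) := by
      intro m hm' hadj
      rcases hnb i _ hadj with h' | ⟨i', h'1, h'2⟩
      · exact Or.inl h'
      · obtain ⟨p, hp⟩ := hfull _ (List.get_mem l ⟨m, hm'⟩)
        have hle : (i':ℕ) ≤ (i:ℕ) := hocc p i' (hp.trans h'1)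
        rcases h'2 with h'2 | h'2
        · omega
        · refine Or.inr ⟨?_, by omega⟩
          rw [h'1]
          have : i' = (⟨(i:ℕ)-1, Nat.lt_of_le_of_lt (Nat.sub_le _ _) i.isLt⟩ : Fin (α+1)) :=
            Fin.ext (by simp; omega)
          rw [this]
    rcases hclass ms hms hadjs with ⟨e1, e2⟩ | ⟨e1, e2⟩ <;>
      rcases hclass mp hmp hadjp with ⟨f1, f2⟩ | ⟨f1, f2⟩
    · exact hvne (e1.trans f1.symm)
    · omega
    · omega
    · exact hvne (e1.trans f1.symm)

/-- In `Z_{α,β}` augmented with at most `α` added vertices and at most `β` added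
edges, fully occupied by `n = 1 + (2β+1)(α+1)` robots, the robot starting at the
leaf of an arm incident to no added edge can never reach the center. -/
theorem leaf_robot_never_reaches_center (α β a : ℕ) (ha : a ≤ α)
    (H : SimpleGraph (ZVert α β ⊕ Fin a))
    (hZ : ∀ u v : ZVert α β, (ZGraph α β).Adj u v → H.Adj (Sum.inl u) (Sum.inl v))
    (hbudget :
      (H.edgeSet \ (Sym2.map Sum.inl '' (ZGraph α β).edgeSet)).ncard ≤ β)
    (j : Fin (2 * β + 1))
    (harm : ∀ (i : Fin (α + 1)) (w : ZVert α β ⊕ Fin a),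
      H.Adj (Sum.inl (Sum.inr (j, i))) w →
        ∃ u : ZVert α β, w = Sum.inl u ∧ (ZGraph α β).Adj (Sum.inr (j, i)) u)
    (S : Fin (1 + (2 * β + 1) * (α + 1)) → ZVert α β ⊕ Fin a)
    (hS : Function.Injective S)
    (r0 : Fin (1 + (2 * β + 1) * (α + 1)))
    (hr0 : S r0 = Sum.inl (Sum.inr (j, ⟨α, Nat.lt_succ_self α⟩)))
    (T : Fin (1 + (2 * β + 1) * (α + 1)) → ZVert α β ⊕ Fin a)
    (hreach : Relation.ReflTransGen
      (fun A B => A = B ∨ IsPathMove H A B ∨ IsRotation H A B) S T) :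
    T r0 ≠ Sum.inl (Sum.inl ()) := by
  have hnb : ∀ (i : Fin (α+1)) (w : ZVert α β ⊕ Fin a), H.Adj (armV α β a j i) w →
      (w = Sum.inl (Sum.inl ()) ∧ (i:ℕ) = 0) ∨
      ∃ i' : Fin (α+1), w = armV α β a j i' ∧
        ((i':ℕ) = (i:ℕ)+1 ∨ (i:ℕ) = (i':ℕ)+1) := by
    intro i w h
    obtain ⟨u, rfl, hadj⟩ := harm i w h
    rcases zgraph_adj_arm j i u hadj with ⟨rfl, h0⟩ | ⟨i', rfl, hrel⟩
    · exact Or.inl ⟨rfl, h0⟩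
    · exact Or.inr ⟨i', rfl, hrel⟩
  have hInvS : RobotInv α β a j r0 S := by
    refine ⟨hS, ⟨α, Nat.lt_succ_self α⟩, hr0, ?_⟩
    intro k hk r h
    have hk' : α < (k:ℕ) := hk
    have := k.isLt
    omega
  have hInvT : RobotInv α β a j r0 T := by
    induction hreach with
    | refl => exact hInvS
    | tail h1 h2 ih =>
      rcases h2 with rfl | hm | hm
      · exact ih
      · exact step_path ha hnb ih hm
      · exact step_rot hnb ih hm
  obtain ⟨-, i, hTi, -⟩ := hInvT
  rw [hTi]
  exact armV_ne_center α β a j i
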